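/- Let C = (C, ⊗, I) be a monoidal category admitting an initial object 0 and a coproduct I + I of the unit object with itself, and suppose both of these colimits are preserved by each functor A ⊗ (−). If the objects 0 and I + I admit right duals, then C is semi-additive. -/

import Mathlib

open CategoryTheory CategoryTheory.Limits CategoryTheory.MonoidalCategory

universe v u

/-- `Y` is a right dual of `X`, witnessed by `η : 𝟙_ C ⟶ Y ⊗ X`, when every morphism
`f : A ⟶ B ⊗ X` factors as `(g ▷ X) ∘ (A ◁ η)` (modulo unitor and associator) for a
unique `g : A ⊗ Y ⟶ B`. -/
def IsRightDual {C : Type u} [Category.{v} C] [MonoidalCategory C]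
    (X Y : C) (η : 𝟙_ C ⟶ Y ⊗ X) : Prop :=
  ∀ (A B : C) (f : A ⟶ B ⊗ X), ∃! g : A ⊗ Y ⟶ B,
    f = (ρ_ A).inv ≫ (A ◁ η) ≫ (α_ A Y X).inv ≫ (g ▷ X)

/-- `Y` is a left dual of `X`, witnessed by `η : 𝟙_ C ⟶ X ⊗ Y`, when every morphism
`f : A ⟶ X ⊗ B` factors as `(X ◁ g) ∘ (η ▷ A)` (modulo unitor and associator) for a
unique `g : Y ⊗ A ⟶ B`. -/
def IsLeftDual {C : Type u} [Category.{v} C] [MonoidalCategory C]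
    (X Y : C) (η : 𝟙_ C ⟶ X ⊗ Y) : Prop :=
  ∀ (A B : C) (f : A ⟶ X ⊗ B), ∃! g : Y ⊗ A ⟶ B,
    f = (λ_ A).inv ≫ (η ▷ A) ≫ (α_ X Y A).hom ≫ (X ◁ g)

/-- A semi-additive structure on a category `C`: a commutative monoid structure on each
hom-set, preserved by composition on either side (composition is bilinear). -/
structure SemiAdditive (C : Type u) [Category.{v} C] where
  add : ∀ {A B : C}, (A ⟶ B) → (A ⟶ B) → (A ⟶ B)
  zero : ∀ {A B : C}, A ⟶ B
  add_assoc : ∀ {A B : C} (f g h : A ⟶ B), add (add f g) h = add f (add g h)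
  add_comm : ∀ {A B : C} (f g : A ⟶ B), add f g = add g f
  zero_add : ∀ {A B : C} (f : A ⟶ B), add zero f = f
  comp_add : ∀ {A B D : C} (f : A ⟶ B) (g h : B ⟶ D), f ≫ add g h = add (f ≫ g) (f ≫ h)
  add_comp : ∀ {A B D : C} (f g : A ⟶ B) (h : B ⟶ D), add f g ≫ h = add (f ≫ h) (g ≫ h)
  comp_zero : ∀ {A B D : C} (f : A ⟶ B), f ≫ (zero : B ⟶ D) = (zero : A ⟶ D)
  zero_comp : ∀ {A B D : C} (f : B ⟶ D), (zero : A ⟶ B) ≫ f = (zero : A ⟶ D)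

/-- **Theorem 3 ("if" direction).** Let `C` be a monoidal category with an initial object
`O` and a coproduct `J = 𝟙_C + 𝟙_C` of the unit with itself, both preserved by each
functor `A ⊗ (−)`.  If `O` and `J` admit right duals, then `C` is semi-additive. -/
theorem semiAdditive_of_rightDuals {C : Type u} [Category.{v} C] [MonoidalCategory C]
    (O : C) (hO : IsInitial O)
    (J : C) (j₁ j₂ : 𝟙_ C ⟶ J) (hJ : IsColimit (BinaryCofan.mk j₁ j₂))
    (hpO : ∀ A : C, IsInitial (A ⊗ O))
    (hpJ : ∀ A : C, IsColimit (BinaryCofan.mk (A ◁ j₁) (A ◁ j₂)))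
    (hdO : ∃ (Y : C) (η : 𝟙_ C ⟶ Y ⊗ O), IsRightDual O Y η)
    (hdJ : ∃ (D : C) (η : 𝟙_ C ⟶ D ⊗ J), IsRightDual J D η) :
    Nonempty (SemiAdditive C) := by
  obtain ⟨Y, η₀, hY⟩ := hdO
  obtain ⟨D, η, hD⟩ := hdJ
  -- Step 1: all morphisms into `B ⊗ O` agree, hence `O` is terminal as well as initial.
  have sing : ∀ (A B : C) (f f' : A ⟶ B ⊗ O), f = f' := by
    intro A B f f'
    obtain ⟨g, hg, -⟩ := hY A B f
    obtain ⟨g', hg', -⟩ := hY A B f'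
    rw [hg, hg', (hpO (A ⊗ Y)).hom_ext (g ▷ O) (g' ▷ O)]
  have tuniq : ∀ {A : C} (v v' : A ⟶ O), v = v' := by
    intro A v v'
    have h := sing A (𝟙_ C) (v ≫ (λ_ O).inv) (v' ≫ (λ_ O).inv)
    have h2 := congrArg (fun k => k ≫ (λ_ O).hom) h
    simpa using h2
  obtain ⟨t⟩ : Nonempty (∀ A : C, A ⟶ O) :=
    ⟨fun A => (ρ_ A).inv ≫ (A ◁ (η₀ ≫ (hpO Y).to O)) ≫ (hpO A).to O⟩
  -- zero morphisms
  obtain ⟨z, zcomp, compz, wz⟩ :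
      ∃ z : ∀ A B : C, A ⟶ B,
        (∀ (A B B' : C) (f : B ⟶ B'), z A B ≫ f = z A B') ∧
        (∀ (A A' B : C) (f : A ⟶ A'), f ≫ z A' B = z A B) ∧
        (∀ (A X X' : C), A ◁ z X X' = z (A ⊗ X) (A ⊗ X')) := by
    refine ⟨fun A B => t A ≫ hO.to B, ?_, ?_, ?_⟩
    · intro A B B' f
      rw [Category.assoc, hO.hom_ext (hO.to B ≫ f) (hO.to B')]
    · intro A A' B f
      rw [← Category.assoc, tuniq (f ≫ t A') (t A)]
    · intro A X X'
      rw [MonoidalCategory.whiskerLeft_comp,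
        (hpO A).hom_ext (A ◁ hO.to X') (t (A ⊗ O) ≫ hO.to (A ⊗ X')),
        ← Category.assoc, tuniq (A ◁ t X ≫ t (A ⊗ O)) (t (A ⊗ X))]
  -- Step 2: coproduct machinery for `A ⊗ J`.
  have jepi : ∀ {A Z : C} {F G : A ⊗ J ⟶ Z},
      (A ◁ j₁) ≫ F = (A ◁ j₁) ≫ G → (A ◁ j₂) ≫ F = (A ◁ j₂) ≫ G → F = G := by
    intro A Z F G h1 h2
    refine (hpJ A).hom_ext ?_
    rintro ⟨⟨⟩⟩
    · exact h1
    · exact h2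
  obtain ⟨dsc, dsc₁, dsc₂⟩ :
      ∃ dsc : ∀ (A : C) {Z : C}, (A ⟶ Z) → (A ⟶ Z) → (A ⊗ J ⟶ Z),
        (∀ (A : C) {Z : C} (u v : A ⟶ Z), (A ◁ j₁) ≫ dsc A u v = (ρ_ A).hom ≫ u) ∧
        (∀ (A : C) {Z : C} (u v : A ⟶ Z), (A ◁ j₂) ≫ dsc A u v = (ρ_ A).hom ≫ v) := by
    refine ⟨fun A {Z} u v =>
      (hpJ A).desc (BinaryCofan.mk ((ρ_ A).hom ≫ u) ((ρ_ A).hom ≫ v)), ?_, ?_⟩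
    · intro A Z u v
      exact (hpJ A).fac
        (BinaryCofan.mk ((ρ_ A).hom ≫ u) ((ρ_ A).hom ≫ v)) ⟨WalkingPair.left⟩
    · intro A Z u v
      exact (hpJ A).fac
        (BinaryCofan.mk ((ρ_ A).hom ≫ u) ((ρ_ A).hom ≫ v)) ⟨WalkingPair.right⟩
  have dpost : ∀ (A : C) {Z Z' : C} (u v : A ⟶ Z) (h : Z ⟶ Z'),
      dsc A u v ≫ h = dsc A (u ≫ h) (v ≫ h) := by
    intro A Z Z' u v h
    refine jepi ?_ ?_
    · rw [← Category.assoc, dsc₁, dsc₁, Category.assoc]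
    · rw [← Category.assoc, dsc₂, dsc₂, Category.assoc]
  have wdsc : ∀ {W A : C} (h : W ⟶ A) {Z : C} (u v : A ⟶ Z),
      (h ▷ J) ≫ dsc A u v = dsc W (h ≫ u) (h ≫ v) := by
    intro W A h Z u v
    refine jepi ?_ ?_
    · rw [← Category.assoc, whisker_exchange, Category.assoc, dsc₁, dsc₁,
        ← Category.assoc, rightUnitor_naturality, Category.assoc]
    · rw [← Category.assoc, whisker_exchange, Category.assoc, dsc₂, dsc₂,
        ← Category.assoc, rightUnitor_naturality, Category.assoc]
  -- the two "projections" `J ⟶ 𝟙`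
  obtain ⟨q₁, jq₁₁, jq₂₁⟩ : ∃ q : J ⟶ 𝟙_ C,
      j₁ ≫ q = 𝟙 (𝟙_ C) ∧ j₂ ≫ q = z (𝟙_ C) (𝟙_ C) :=
    ⟨hJ.desc (BinaryCofan.mk (𝟙 (𝟙_ C)) (z (𝟙_ C) (𝟙_ C))),
      by exact hJ.fac (BinaryCofan.mk (𝟙 (𝟙_ C)) (z (𝟙_ C) (𝟙_ C))) ⟨WalkingPair.left⟩,
      by exact hJ.fac (BinaryCofan.mk (𝟙 (𝟙_ C)) (z (𝟙_ C) (𝟙_ C))) ⟨WalkingPair.right⟩⟩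
  obtain ⟨q₂, jq₁₂, jq₂₂⟩ : ∃ q : J ⟶ 𝟙_ C,
      j₁ ≫ q = z (𝟙_ C) (𝟙_ C) ∧ j₂ ≫ q = 𝟙 (𝟙_ C) :=
    ⟨hJ.desc (BinaryCofan.mk (z (𝟙_ C) (𝟙_ C)) (𝟙 (𝟙_ C))),
      by exact hJ.fac (BinaryCofan.mk (z (𝟙_ C) (𝟙_ C)) (𝟙 (𝟙_ C))) ⟨WalkingPair.left⟩,
      by exact hJ.fac (BinaryCofan.mk (z (𝟙_ C) (𝟙_ C)) (𝟙 (𝟙_ C))) ⟨WalkingPair.right⟩⟩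
  -- projections `A ⊗ J ⟶ A`
  obtain ⟨p1, hp1⟩ : ∃ p : ∀ A : C, A ⊗ J ⟶ A, ∀ A, p A = dsc A (𝟙 A) (z A A) :=
    ⟨_, fun _ => rfl⟩
  obtain ⟨p2, hp2⟩ : ∃ p : ∀ A : C, A ⊗ J ⟶ A, ∀ A, p A = dsc A (z A A) (𝟙 A) :=
    ⟨_, fun _ => rfl⟩
  have p11 : ∀ A : C, (A ◁ j₁) ≫ p1 A = (ρ_ A).hom := by
    intro A; rw [hp1, dsc₁, Category.comp_id]
  have p12 : ∀ A : C, (A ◁ j₂) ≫ p1 A = z (A ⊗ 𝟙_ C) A := by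
    intro A; rw [hp1, dsc₂, compz]
  have p21 : ∀ A : C, (A ◁ j₁) ≫ p2 A = z (A ⊗ 𝟙_ C) A := by
    intro A; rw [hp2, dsc₁, compz]
  have p22 : ∀ A : C, (A ◁ j₂) ≫ p2 A = (ρ_ A).hom := by
    intro A; rw [hp2, dsc₂, Category.comp_id]
  have dz1 : ∀ (A : C) {Z : C} (u : A ⟶ Z), dsc A u (z A Z) = p1 A ≫ u := by
    intro A Z u
    rw [hp1, dpost, Category.id_comp, zcomp]
  have dz2 : ∀ (A : C) {Z : C} (u : A ⟶ Z), dsc A (z A Z) u = p2 A ≫ u := by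
    intro A Z u
    rw [hp2, dpost, Category.id_comp, zcomp]
  have ex1 : ∀ {W B : C} (g : W ⟶ B), (g ▷ J) ≫ p1 B = p1 W ≫ g := by
    intro W B g
    refine jepi ?_ ?_
    · rw [← Category.assoc, whisker_exchange, Category.assoc, p11,
        ← Category.assoc, p11, rightUnitor_naturality]
    · rw [← Category.assoc, whisker_exchange, Category.assoc, p12,
        ← Category.assoc, p12, compz, zcomp]
  have ex2 : ∀ {W B : C} (g : W ⟶ B), (g ▷ J) ≫ p2 B = p2 W ≫ g := by
    intro W B g
    refine jepi ?_ ?_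
    · rw [← Category.assoc, whisker_exchange, Category.assoc, p21,
        ← Category.assoc, p21, compz, zcomp]
    · rw [← Category.assoc, whisker_exchange, Category.assoc, p22,
        ← Category.assoc, p22, rightUnitor_naturality]
  have palt1 : ∀ A : C, p1 A = (A ◁ q₁) ≫ (ρ_ A).hom := by
    intro A
    refine jepi ?_ ?_
    · rw [p11, ← Category.assoc, ← MonoidalCategory.whiskerLeft_comp, jq₁₁,
        MonoidalCategory.whiskerLeft_id, Category.id_comp]
    · rw [p12, ← Category.assoc, ← MonoidalCategory.whiskerLeft_comp, jq₂₁, wz, zcomp]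
  have palt2 : ∀ A : C, p2 A = (A ◁ q₂) ≫ (ρ_ A).hom := by
    intro A
    refine jepi ?_ ?_
    · rw [p21, ← Category.assoc, ← MonoidalCategory.whiskerLeft_comp, jq₁₂, wz, zcomp]
    · rw [p22, ← Category.assoc, ← MonoidalCategory.whiskerLeft_comp, jq₂₂,
        MonoidalCategory.whiskerLeft_id, Category.id_comp]
  -- Step 3: use the right dual of `J` to produce `δ = j₁ + j₂ : 𝟙 ⟶ J`.
  obtain ⟨e1, he1, -⟩ := hD (𝟙_ C) (𝟙_ C) ((ρ_ (𝟙_ C)).inv ≫ (𝟙_ C ◁ j₁))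
  obtain ⟨e2, he2, -⟩ := hD (𝟙_ C) (𝟙_ C) ((ρ_ (𝟙_ C)).inv ≫ (𝟙_ C ◁ j₂))
  have coevIη : (ρ_ (𝟙_ C)).inv ≫ (𝟙_ C ◁ η) ≫ (α_ (𝟙_ C) D J).inv ≫ ((λ_ D).hom ▷ J)
      = η := by
    rw [← leftUnitor_tensor_hom, leftUnitor_naturality, ← Category.assoc, unitors_equal]
    simp
  obtain ⟨δ, hδ⟩ : ∃ d : 𝟙_ C ⟶ J,
      d = η ≫ dsc D ((λ_ D).inv ≫ e1 ≫ j₁) ((λ_ D).inv ≫ e2 ≫ j₂) := ⟨_, rfl⟩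
  have dq1 : δ ≫ q₁ = 𝟙 (𝟙_ C) := by
    rw [hδ, Category.assoc, dpost]
    simp only [Category.assoc, jq₁₁, jq₂₁, Category.comp_id, compz]
    rw [dz1]
    conv_lhs => rw [← coevIη]
    simp only [Category.assoc]
    rw [reassoc_of% (ex1 (λ_ D).hom)]
    simp only [Iso.hom_inv_id_assoc]
    rw [← ex1 e1]
    rw [reassoc_of% he1.symm, p11, Iso.inv_hom_id]
  have dq2 : δ ≫ q₂ = 𝟙 (𝟙_ C) := by
    rw [hδ, Category.assoc, dpost]
    simp only [Category.assoc, jq₁₂, jq₂₂, Category.comp_id, compz]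
    rw [dz2]
    conv_lhs => rw [← coevIη]
    simp only [Category.assoc]
    rw [reassoc_of% (ex2 (λ_ D).hom)]
    simp only [Iso.hom_inv_id_assoc]
    rw [← ex2 e2]
    rw [reassoc_of% he2.symm, p22, Iso.inv_hom_id]
  -- Step 4: the addition and its laws.
  obtain ⟨add, hadd⟩ : ∃ ad : ∀ {A B : C}, (A ⟶ B) → (A ⟶ B) → (A ⟶ B),
      ∀ {A B : C} (f g : A ⟶ B),
        ad f g = ((ρ_ A).inv ≫ (A ◁ δ)) ≫ dsc A f g :=
    ⟨fun {A B} f g => ((ρ_ A).inv ≫ (A ◁ δ)) ≫ dsc A f g, fun _ _ => rfl⟩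
  have cadd : ∀ {W A B : C} (h : W ⟶ A) (f g : A ⟶ B),
      h ≫ add f g = add (h ≫ f) (h ≫ g) := by
    intro W A B h f g
    rw [hadd, hadd]
    simp only [Category.assoc]
    rw [rightUnitor_inv_naturality_assoc, ← whisker_exchange_assoc, wdsc]
  have addc : ∀ {A B B' : C} (f g : A ⟶ B) (k : B ⟶ B'),
      add f g ≫ k = add (f ≫ k) (g ≫ k) := by
    intro A B B' f g k
    rw [hadd, hadd, Category.assoc, dpost]
  have unitR : ∀ {A B : C} (f : A ⟶ B), add f (z A B) = f := by
    intro A B f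
    rw [hadd, dz1, palt1]
    simp only [Category.assoc]
    rw [← MonoidalCategory.whiskerLeft_comp_assoc, dq1]
    simp
  have unitL : ∀ {A B : C} (f : A ⟶ B), add (z A B) f = f := by
    intro A B f
    rw [hadd, dz2, palt2]
    simp only [Category.assoc]
    rw [← MonoidalCategory.whiskerLeft_comp_assoc, dq2]
    simp
  have dadd : ∀ {A Z : C} (u₁ u₂ v₁ v₂ : A ⟶ Z),
      add (dsc A u₁ u₂) (dsc A v₁ v₂) = dsc A (add u₁ v₁) (add u₂ v₂) := by
    intro A Z u₁ u₂ v₁ v₂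
    refine jepi ?_ ?_
    · rw [cadd, dsc₁, dsc₁, dsc₁, ← cadd]
    · rw [cadd, dsc₂, dsc₂, dsc₂, ← cadd]
  have comm : ∀ {A B : C} (f g : A ⟶ B), add f g = add g f := by
    intro A B f g
    have h1 : add (dsc A (z A B) g) (dsc A f (z A B)) = dsc A f g := by
      rw [dadd, unitL, unitR]
    rw [hadd f g, ← h1, cadd, ← hadd, ← hadd, unitL, unitR]
  have assoc' : ∀ {A B : C} (f g k : A ⟶ B), add (add f g) k = add f (add g k) := by
    intro A B f g k
    have h2 : add (dsc A f (z A B)) (dsc A g k) = dsc A (add f g) k := by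
      rw [dadd, unitL]
    rw [hadd (add f g) k, ← h2, cadd, ← hadd, ← hadd, unitR]
  exact ⟨{ add := fun {A B} f g => add f g
           zero := fun {A B} => z A B
           add_assoc := fun f g k => assoc' f g k
           add_comm := fun f g => comm f g
           zero_add := fun f => unitL f
           comp_add := fun f g k => cadd f g k
           add_comp := fun f g k => addc f g k
           comp_zero := fun f => compz _ _ _ f
           zero_comp := fun f => zcomp _ _ _ f }⟩
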